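/- Let a, b, c, d be real quaternions with det_ℍ([[a,b],[c,d]]) ≠ 0, and let α, γ ∈ ℝ and β ∈ ℍ with (α, β, γ) ≠ (0, 0, 0). Then there exist α', γ' ∈ ℝ and β' ∈ ℍ with (α', β', γ') ≠ (0, 0, 0) such that for every q ∈ ℍ with c·q + d ≠ 0, setting L(q) = (a·q + b)·(c·q + d)⁻¹, one has α·|q|² + 2·Re(β·q) + γ = 0 if and only if α'·|L(q)|² + 2·Re(β'·L(q)) + γ' = 0. (In other words, quaternionic fractional linear transformations map the family of 3-spheres and 3-dimensional affine hyperplanes of ℍ, described as zero sets of equations α·|q|² + 2·Re(β·q) + γ = 0, onto itself.) -/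

import Mathlib

open scoped Quaternion

/-- The Dieudonné determinant of a 2×2 quaternionic matrix. -/
noncomputable def detH (A : Matrix (Fin 2) (Fin 2) ℍ[ℝ]) : ℝ :=
  Real.sqrt (‖A 0 0‖ ^ 2 * ‖A 1 1‖ ^ 2 + ‖A 1 0‖ ^ 2 * ‖A 0 1‖ ^ 2
    - 2 * (A 1 0 * star (A 0 0) * A 0 1 * star (A 1 1)).re)

/-- The quadratic form `Q(u,v) = α|u|² + 2 Re(β u v̄) + γ|v|²`. -/
noncomputable def Qf (α : ℝ) (β : ℍ[ℝ]) (γ : ℝ) (u v : ℍ[ℝ]) : ℝ :=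
  α * ‖u‖ ^ 2 + 2 * (β * u * star v).re + γ * ‖v‖ ^ 2

lemma norm_sq_eq_normSq (x : ℍ[ℝ]) : ‖x‖ ^ 2 = Quaternion.normSq x := by
  rw [sq, ← Quaternion.normSq_eq_norm_mul_self]

/-- The key algebraic identity. -/
lemma Qf_key (a b c d : ℍ[ℝ]) (α' : ℝ) (β' : ℍ[ℝ]) (γ' : ℝ) (q l : ℍ[ℝ]) :
    Qf α' β' γ' (a * q + b * l) (c * q + d * l) =
      Qf (α' * ‖a‖ ^ 2 + 2 * (β' * a * star c).re + γ' * ‖c‖ ^ 2)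
        ((α' : ℍ[ℝ]) * (star b * a) + star d * β' * a + star b * star β' * c
          + (γ' : ℍ[ℝ]) * (star d * c))
        (α' * ‖b‖ ^ 2 + 2 * (β' * b * star d).re + γ' * ‖d‖ ^ 2) q l := by
  simp only [Qf, norm_sq_eq_normSq, Quaternion.normSq_def', Quaternion.re_mul,
    Quaternion.imI_mul, Quaternion.imJ_mul, Quaternion.imK_mul, Quaternion.re_add,
    Quaternion.imI_add, Quaternion.imJ_add, Quaternion.imK_add, Quaternion.re_star,
    Quaternion.imI_star, Quaternion.imJ_star, Quaternion.imK_star, Quaternion.re_coe,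
    Quaternion.imI_coe, Quaternion.imJ_coe, Quaternion.imK_coe]
  ring

lemma Qf_scale (α' : ℝ) (β' : ℍ[ℝ]) (γ' : ℝ) (u v l : ℍ[ℝ]) :
    Qf α' β' γ' (u * l) (v * l) = (Qf α' β' γ' u v) * ‖l‖ ^ 2 := by
  have h := Qf_key u 0 v 0 α' β' γ' l 0
  simpa [Qf, mul_comm] using h

lemma Qf_zero (α' : ℝ) (β' : ℍ[ℝ]) (γ' : ℝ)
    (h : ∀ u v : ℍ[ℝ], Qf α' β' γ' u v = 0) : α' = 0 ∧ β' = 0 ∧ γ' = 0 := by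
  have h1 : α' = 0 := by simpa [Qf] using h 1 0
  have h3 : γ' = 0 := by simpa [Qf] using h 0 1
  refine ⟨h1, ?_, h3⟩
  have h2 := h (star β') 1
  simp only [Qf, h1, h3, zero_mul, mul_one, star_one, add_zero, zero_add,
    Quaternion.self_mul_star, Quaternion.re_coe] at h2
  have hn : Quaternion.normSq β' = 0 := by linarith
  exact Quaternion.normSq_eq_zero.mp hn

/-- The linear substitution map on coefficient triples. -/
noncomputable def Tmap (a b c d : ℍ[ℝ]) : (ℝ × ℍ[ℝ] × ℝ) →ₗ[ℝ] (ℝ × ℍ[ℝ] × ℝ) where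
  toFun h :=
    (h.1 * ‖a‖ ^ 2 + 2 * (h.2.1 * a * star c).re + h.2.2 * ‖c‖ ^ 2,
      ((h.1 : ℍ[ℝ]) * (star b * a) + star d * h.2.1 * a + star b * star h.2.1 * c
        + (h.2.2 : ℍ[ℝ]) * (star d * c),
      h.1 * ‖b‖ ^ 2 + 2 * (h.2.1 * b * star d).re + h.2.2 * ‖d‖ ^ 2))
  map_add' x y := by
    obtain ⟨x1, x2, x3⟩ := x
    obtain ⟨y1, y2, y3⟩ := y
    simp only [Prod.mk_add_mk, Prod.mk.injEq, star_add, add_mul, mul_add,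
      Quaternion.re_add, Quaternion.coe_add]
    refine ⟨by ring, by abel, by ring⟩
  map_smul' r x := by
    obtain ⟨x1, x2, x3⟩ := x
    simp only [Prod.smul_mk, smul_eq_mul, RingHom.id_apply, Prod.mk.injEq,
      Quaternion.coe_mul, Quaternion.coe_mul_eq_smul, Quaternion.star_smul,
      smul_mul_assoc, mul_smul_comm, Quaternion.re_smul, smul_add]
    refine ⟨by ring, trivial, by ring⟩

lemma Qf_Tmap (a b c d : ℍ[ℝ]) (h : ℝ × ℍ[ℝ] × ℝ) (q l : ℍ[ℝ]) :
    Qf (Tmap a b c d h).1 (Tmap a b c d h).2.1 (Tmap a b c d h).2.2 q l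
      = Qf h.1 h.2.1 h.2.2 (a * q + b * l) (c * q + d * l) :=
  (Qf_key a b c d h.1 h.2.1 h.2.2 q l).symm

theorem flt_maps_spheres_hyperplanes (a b c d : ℍ[ℝ]) (hA : detH !![a, b; c, d] ≠ 0)
    (α γ : ℝ) (β : ℍ[ℝ]) (hαβγ : ¬(α = 0 ∧ β = 0 ∧ γ = 0)) :
    ∃ (α' γ' : ℝ) (β' : ℍ[ℝ]), ¬(α' = 0 ∧ β' = 0 ∧ γ' = 0) ∧
      ∀ q : ℍ[ℝ], c * q + d ≠ 0 →
        (α * ‖q‖ ^ 2 + 2 * (β * q).re + γ = 0 ↔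
          α' * ‖(a * q + b) * (c * q + d)⁻¹‖ ^ 2 +
            2 * (β' * ((a * q + b) * (c * q + d)⁻¹)).re + γ' = 0) := by
  -- the radicand is positive
  have hr : 0 < ‖a‖ ^ 2 * ‖d‖ ^ 2 + ‖c‖ ^ 2 * ‖b‖ ^ 2
      - 2 * (c * star a * b * star d).re := by
    have hdet : detH !![a, b; c, d] = Real.sqrt (‖a‖ ^ 2 * ‖d‖ ^ 2 + ‖c‖ ^ 2 * ‖b‖ ^ 2
        - 2 * (c * star a * b * star d).re) := by
      simp [detH, Matrix.cons_val_zero, Matrix.cons_val_one, Matrix.head_cons]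
    rw [hdet] at hA
    exact Real.sqrt_ne_zero'.mp hA
  -- surjectivity of (q, l) ↦ (a q + b l, c q + d l)
  have hsurj : ∀ x y : ℍ[ℝ], ∃ q l : ℍ[ℝ], a * q + b * l = x ∧ c * q + d * l = y := by
    intro x y
    by_cases hc : c = 0
    · subst hc
      simp only [norm_zero, zero_mul, Quaternion.re_zero, ne_eq, mul_zero, sub_zero,
        add_zero] at hr
      have hzr : (0 : ℍ[ℝ]) * star a * b * star d = 0 := by simp
      have ha : a ≠ 0 := by rintro rfl; simp at hr
      have hd : d ≠ 0 := by rintro rfl; simp at hr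
      refine ⟨a⁻¹ * (x - b * (d⁻¹ * y)), d⁻¹ * y, ?_, ?_⟩
      · rw [mul_inv_cancel_left₀ ha, sub_add_cancel]
      · rw [zero_mul, mul_inv_cancel_left₀ hd, zero_add]
    · set e : ℍ[ℝ] := b - a * c⁻¹ * d with he
      have hce : e ≠ 0 := by
        intro h0
        have hb : b = a * c⁻¹ * d := by
          have := sub_eq_zero.mp (he ▸ h0)
          exact this
        have haa : star a * a = ((‖a‖ ^ 2 : ℝ) : ℍ[ℝ]) := by
          rw [Quaternion.star_mul_self, norm_sq_eq_normSq]
        have hdd : d * star d = ((‖d‖ ^ 2 : ℝ) : ℍ[ℝ]) := by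
          rw [Quaternion.self_mul_star, norm_sq_eq_normSq]
        have h1 : (c * star a * b * star d).re = ‖a‖ ^ 2 * ‖d‖ ^ 2 := by
          have step : c * star a * b * star d
              = c * (star a * a) * (c⁻¹ * (d * star d)) := by
            rw [hb]; simp only [mul_assoc]
          rw [step, haa, hdd, Quaternion.mul_coe_eq_smul, Quaternion.mul_coe_eq_smul,
            smul_mul_smul_comm, mul_inv_cancel₀ hc]
          simp [Quaternion.re_smul]
        have h2 : ‖b‖ ^ 2 = ‖a‖ ^ 2 * (‖c‖ ^ 2)⁻¹ * ‖d‖ ^ 2 := by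
          rw [hb]
          simp [norm_mul, norm_inv, mul_pow]
        have hc2 : (‖c‖ ^ 2 : ℝ) ≠ 0 := pow_ne_zero _ (norm_ne_zero_iff.mpr hc)
        rw [h1, h2] at hr
        have h3 : ‖c‖ ^ 2 * (‖a‖ ^ 2 * (‖c‖ ^ 2)⁻¹ * ‖d‖ ^ 2) = ‖a‖ ^ 2 * ‖d‖ ^ 2 := by
          field_simp
        rw [h3] at hr
        linarith
      refine ⟨c⁻¹ * (y - d * (e⁻¹ * (x - a * c⁻¹ * y))), e⁻¹ * (x - a * c⁻¹ * y), ?_, ?_⟩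
      · have h3 : e * (e⁻¹ * (x - a * c⁻¹ * y)) = x - a * c⁻¹ * y :=
          mul_inv_cancel_left₀ hce _
        have h4 : b * (e⁻¹ * (x - a * c⁻¹ * y))
            = e * (e⁻¹ * (x - a * c⁻¹ * y)) + a * c⁻¹ * (d * (e⁻¹ * (x - a * c⁻¹ * y))) := by
          rw [he]; noncomm_ring
        have h5 : a * (c⁻¹ * (y - d * (e⁻¹ * (x - a * c⁻¹ * y))))
            = a * c⁻¹ * y - a * c⁻¹ * (d * (e⁻¹ * (x - a * c⁻¹ * y))) := by
          noncomm_ring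
        rw [h5, h4, h3]
        noncomm_ring
      · rw [mul_inv_cancel_left₀ hc, sub_add_cancel]
  -- injectivity of Tmap
  have hinj : Function.Injective (Tmap a b c d) := by
    rw [← LinearMap.ker_eq_bot, LinearMap.ker_eq_bot']
    rintro ⟨α', β', γ'⟩ h0
    have hQ : ∀ u v : ℍ[ℝ], Qf α' β' γ' u v = 0 := by
      intro u v
      obtain ⟨q, l, hq, hl⟩ := hsurj u v
      have hkey := Qf_Tmap a b c d (α', β', γ') q l
      rw [h0, hq, hl] at hkey
      simpa [Qf] using hkey.symm
    obtain ⟨h1, h2, h3⟩ := Qf_zero α' β' γ' hQ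
    simp [h1, h2, h3, Prod.ext_iff]
  -- T is surjective; pick a preimage of (α, β, γ)
  have hTsurj : Function.Surjective (Tmap a b c d) :=
    LinearMap.injective_iff_surjective.mp hinj
  obtain ⟨h', hh'⟩ := hTsurj (α, β, γ)
  obtain ⟨α', β', γ'⟩ := h'
  refine ⟨α', γ', β', ?_, ?_⟩
  · rintro ⟨rfl, rfl, rfl⟩
    apply hαβγ
    have h0 : ((α : ℝ), (β : ℍ[ℝ]), (γ : ℝ)) = (0 : ℝ × ℍ[ℝ] × ℝ) := by
      rw [← hh']; exact map_zero _
    rw [Prod.ext_iff, Prod.ext_iff] at h0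
    exact ⟨h0.1, h0.2.1, h0.2.2⟩
  · intro q hq
    have hs : (0:ℝ) < ‖c * q + d‖ ^ 2 := by
      have := norm_pos_iff.mpr hq
      positivity
    have key := Qf_Tmap a b c d (α', β', γ') q 1
    rw [hh'] at key
    simp only [mul_one] at key
    have key2 : Qf α' β' γ' (a * q + b) (c * q + d)
        = (Qf α' β' γ' ((a * q + b) * (c * q + d)⁻¹) 1) * ‖c * q + d‖ ^ 2 := by
      have hsc := Qf_scale α' β' γ' ((a * q + b) * (c * q + d)⁻¹) 1 (c * q + d)
      rw [inv_mul_cancel_right₀ hq, one_mul] at hsc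
      exact hsc
    have hQ1 : Qf α β γ q 1 = α * ‖q‖ ^ 2 + 2 * (β * q).re + γ := by
      simp [Qf]
    have hQ2 : Qf α' β' γ' ((a * q + b) * (c * q + d)⁻¹) 1
        = α' * ‖(a * q + b) * (c * q + d)⁻¹‖ ^ 2 +
            2 * (β' * ((a * q + b) * (c * q + d)⁻¹)).re + γ' := by
      simp [Qf]
    rw [hQ1, key2, hQ2] at key
    constructor
    · intro hzero
      rw [hzero] at key
      rcases mul_eq_zero.mp key.symm with h | h
      · exact h
      · exact absurd h (ne_of_gt hs)
    · intro hzero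
      rw [hzero, zero_mul] at key
      exact key
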